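/- Fix c ≥ 1 and let c₂ = min{1/(c² + max{0, √(c⁴ − 2c²)}), 1/2}. There exists a constant C > 0 such that for every real ρ with 1 ≤ ρ ≤ c and ρ ≠ √2, the two (distinct) complex roots λ₊ ≠ λ₋ of λ² + ρ²λ + ρ²/2 = 0 satisfy, for all t ≥ 0, |(e^{λ₊t} − e^{λ₋t})/(λ₊ − λ₋)| ≤ C·e^{−(c₂/2)ρ²t}. -/

import Mathlib

lemma root_re_le (c ρ : ℝ) (hc : 1 ≤ c) (hρ1 : 1 ≤ ρ) (hρc : ρ ≤ c) (c₂ : ℝ)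
    (hc₂ : c₂ = min (1 / (c ^ 2 + max 0 (Real.sqrt (c ^ 4 - 2 * c ^ 2)))) (1 / 2))
    (l : ℂ) (hl : l ^ 2 + (ρ ^ 2 : ℂ) * l + (ρ ^ 2 / 2 : ℂ) = 0) :
    l.re ≤ -(c₂ * ρ ^ 2) := by
  set M := max 0 (Real.sqrt (c ^ 4 - 2 * c ^ 2)) with hMdef
  have hMnn : 0 ≤ M := le_max_left _ _
  have hden : 0 < c ^ 2 + M := by nlinarith
  have hc₂a : c₂ ≤ 1 / (c ^ 2 + M) := hc₂ ▸ min_le_left _ _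
  have hc₂b : c₂ ≤ 1 / 2 := hc₂ ▸ min_le_right _ _
  have hc₂pos : 0 < c₂ := by
    rw [hc₂]; exact lt_min (by positivity) (by norm_num)
  set x := l.re with hx
  set y := l.im with hy
  have hl' := hl
  rw [Complex.ext_iff] at hl'
  obtain ⟨hre, him⟩ := hl'
  simp [pow_two, Complex.mul_re, Complex.mul_im, ← hx, ← hy] at hre him
  clear_value x y
  clear hx hy hl
  rcases eq_or_ne y 0 with hy0 | hy0
  · rw [hy0] at hre
    have hre' : x ^ 2 + ρ ^ 2 * x + ρ ^ 2 / 2 = 0 := by ring_nf; ring_nf at hre; linarith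
    set D := ρ ^ 4 - 2 * ρ ^ 2 with hDdef
    have hDx : (2 * x + ρ ^ 2) ^ 2 = D := by rw [hDdef]; linear_combination 4 * hre'
    have hDnn : 0 ≤ D := hDx ▸ sq_nonneg _
    clear him hre
    have hsq : Real.sqrt D * Real.sqrt D = D := Real.mul_self_sqrt hDnn
    have hs_nn : 0 ≤ Real.sqrt D := Real.sqrt_nonneg D
    have h1 : 2 * x + ρ ^ 2 ≤ Real.sqrt D := by nlinarith [hDx, hsq]
    have hDle : D ≤ c ^ 4 - 2 * c ^ 2 := by
      have h := mul_nonneg (by nlinarith : (0:ℝ) ≤ c ^ 2 - ρ ^ 2)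
        (by nlinarith : (0:ℝ) ≤ c ^ 2 + ρ ^ 2 - 2)
      rw [hDdef]; nlinarith [h]
    have hsM : Real.sqrt D ≤ M :=
      le_trans (Real.sqrt_le_sqrt hDle) (le_max_right _ _)
    have hprod : (ρ ^ 2 - Real.sqrt D) * (ρ ^ 2 + Real.sqrt D) = 2 * ρ ^ 2 := by
      rw [hDdef] at hsq; linear_combination -hsq
    have hρsq : (1:ℝ) ≤ ρ ^ 2 := by nlinarith
    have hρc2 : ρ ^ 2 ≤ c ^ 2 := by nlinarith
    have h4 : 0 < ρ ^ 2 + Real.sqrt D := by linarith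
    have h5 : 0 < ρ ^ 2 - Real.sqrt D := by
      rcases lt_or_ge 0 (ρ ^ 2 - Real.sqrt D) with h | h
      · exact h
      · exfalso
        have h' := mul_nonpos_of_nonpos_of_nonneg h h4.le
        linarith [hprod ▸ h', hρsq]
    have h2 : ρ ^ 2 + Real.sqrt D ≤ c ^ 2 + M := by linarith
    have h3 : c₂ * (ρ ^ 2 + Real.sqrt D) ≤ 1 := by
      have : c₂ * (c ^ 2 + M) ≤ 1 := by
        rw [div_eq_mul_inv] at hc₂a
        calc c₂ * (c ^ 2 + M) ≤ (1 * (c ^ 2 + M)⁻¹) * (c ^ 2 + M) := by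
              exact mul_le_mul_of_nonneg_right hc₂a hden.le
          _ = 1 := by field_simp
      have h' := mul_le_mul_of_nonneg_left h2 hc₂pos.le
      linarith
    have h6 : 2 * c₂ * ρ ^ 2 ≤ ρ ^ 2 - Real.sqrt D := by
      have hnn : 0 ≤ 1 - c₂ * (ρ ^ 2 + Real.sqrt D) := by linarith
      have hmul := mul_nonneg hnn h5.le
      have hcalc : (1 - c₂ * (ρ ^ 2 + Real.sqrt D)) * (ρ ^ 2 - Real.sqrt D)
          = (ρ ^ 2 - Real.sqrt D) - c₂ * ((ρ ^ 2 - Real.sqrt D) * (ρ ^ 2 + Real.sqrt D)) := by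
        ring
      rw [hcalc, hprod] at hmul
      linarith
    linarith
  · have hx0 : 2 * x + ρ ^ 2 = 0 := by
      have h : y * (2 * x + ρ ^ 2) = 0 := by linear_combination him
      rcases mul_eq_zero.1 h with h' | h'
      · exact absurd h' hy0
      · exact h'
    nlinarith [hc₂b, hρ1]

/-- Uniform bound on the Green-matrix building block
`ℰ(t) = (e^{λ₊t} − e^{λ₋t})/(λ₊ − λ₋)` of the linearized Oldroyd-B system
(`η = ν₁ = ν₂ = 1`) on intermediate frequencies `1 ≤ ρ ≤ c`, `ρ ≠ √2`:
`|ℰ(t)| ≤ C e^{−(c₂/2)ρ²t}` with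
`c₂ = min{1/(c² + max{0, √(c⁴ − 2c²)}), 1/2}`. -/
theorem stmt12 (c : ℝ) (hc : 1 ≤ c)
    (c₂ : ℝ)
    (hc₂ : c₂ = min (1 / (c ^ 2 + max 0 (Real.sqrt (c ^ 4 - 2 * c ^ 2)))) (1 / 2)) :
    ∃ C : ℝ, 0 < C ∧
      ∀ ρ : ℝ, 1 ≤ ρ → ρ ≤ c → ρ ≠ Real.sqrt 2 →
        ∀ lp lm : ℂ, lp ≠ lm →
          lp ^ 2 + (ρ ^ 2 : ℂ) * lp + (ρ ^ 2 / 2 : ℂ) = 0 →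
          lm ^ 2 + (ρ ^ 2 : ℂ) * lm + (ρ ^ 2 / 2 : ℂ) = 0 →
          ∀ t : ℝ, 0 ≤ t →
            ‖(Complex.exp (lp * t) - Complex.exp (lm * t)) / (lp - lm)‖
              ≤ C * Real.exp (-(c₂ / 2) * ρ ^ 2 * t) := by
  have hc₂pos : 0 < c₂ := by
    have hMnn : (0:ℝ) ≤ max 0 (Real.sqrt (c ^ 4 - 2 * c ^ 2)) := le_max_left _ _
    rw [hc₂]; exact lt_min (by positivity) (by norm_num)
  refine ⟨2 / c₂, by positivity, ?_⟩
  intro ρ hρ1 hρc _ lp lm hne hp hm t ht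
  have hrep : lp.re ≤ -(c₂ * ρ ^ 2) := root_re_le c ρ hc hρ1 hρc c₂ hc₂ lp hp
  have hrem : lm.re ≤ -(c₂ * ρ ^ 2) := root_re_le c ρ hc hρ1 hρc c₂ hc₂ lm hm
  set a := c₂ * ρ ^ 2 with hadef
  have hapos : 0 < a := by positivity
  -- mean value along segment
  set g : ℝ → ℂ := fun s => Complex.exp ((lm + (s : ℂ) * (lp - lm)) * (t : ℂ)) with hgdef
  set g' : ℝ → ℂ := fun s =>
    Complex.exp ((lm + (s : ℂ) * (lp - lm)) * (t : ℂ)) * ((lp - lm) * (t : ℂ)) with hg'def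
  have hg : ∀ s ∈ Set.Icc (0:ℝ) 1, HasDerivWithinAt g (g' s) (Set.Icc 0 1) s := by
    intro s _
    have h0 : HasDerivAt (fun s : ℝ => (s : ℂ)) 1 s := by
      simpa using (hasDerivAt_id s).ofReal_comp
    have h1 : HasDerivAt (fun s : ℝ => (lm + (s : ℂ) * (lp - lm)) * (t : ℂ))
        ((lp - lm) * (t : ℂ)) s := by
      have := ((h0.mul_const (lp - lm)).const_add lm).mul_const (t : ℂ)
      simpa using this
    exact h1.cexp.hasDerivWithinAt
  have hbound : ∀ s ∈ Set.Icc (0:ℝ) 1,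
      ‖g' s‖ ≤ (t * Real.exp (-(a * t))) * ‖lp - lm‖ := by
    intro s hs
    rw [hg'def]
    obtain ⟨hs0, hs1⟩ := hs
    have hzre : (lm + (s : ℂ) * (lp - lm)).re ≤ -a := by
      have : (lm + (s : ℂ) * (lp - lm)).re = (1 - s) * lm.re + s * lp.re := by
        simp [Complex.add_re, Complex.mul_re, Complex.sub_re, Complex.sub_im]; ring
      rw [this]; nlinarith [hrep, hrem]
    have hrre : ((lm + (s : ℂ) * (lp - lm)) * (t : ℂ)).re
        = (lm + (s : ℂ) * (lp - lm)).re * t := by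
      simp [Complex.mul_re]
    have hexp : ‖Complex.exp ((lm + (s : ℂ) * (lp - lm)) * (t : ℂ))‖
        ≤ Real.exp (-(a * t)) := by
      rw [Complex.norm_exp, hrre]
      exact Real.exp_le_exp.2 (by nlinarith [hzre])
    calc ‖Complex.exp ((lm + (s : ℂ) * (lp - lm)) * (t : ℂ)) * ((lp - lm) * (t : ℂ))‖
        = ‖Complex.exp ((lm + (s : ℂ) * (lp - lm)) * (t : ℂ))‖
            * (‖lp - lm‖ * |t|) := by
          simp [map_mul, norm_mul, Complex.norm_real]
      _ ≤ Real.exp (-(a * t)) * (‖lp - lm‖ * t) := by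
          rw [abs_of_nonneg ht]
          exact mul_le_mul_of_nonneg_right hexp (by positivity)
      _ = (t * Real.exp (-(a * t))) * ‖lp - lm‖ := by ring
  have hmv := (convex_Icc (0:ℝ) 1).norm_image_sub_le_of_norm_hasDerivWithin_le hg hbound
      (Set.left_mem_Icc.2 zero_le_one) (Set.right_mem_Icc.2 zero_le_one)
  have hg1 : g 1 = Complex.exp (lp * (t : ℂ)) := by simp [hgdef]
  have hg0 : g 0 = Complex.exp (lm * (t : ℂ)) := by simp [hgdef]
  rw [hg1, hg0] at hmv
  simp only [norm_sub_rev] at hmv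
  have hmv' : ‖Complex.exp (lp * (t:ℂ)) - Complex.exp (lm * (t:ℂ))‖
      ≤ (t * Real.exp (-(a * t))) * ‖lp - lm‖ := by
    have : ‖(1:ℝ) - 0‖ = 1 := by norm_num
    calc ‖Complex.exp (lp * (t:ℂ)) - Complex.exp (lm * (t:ℂ))‖
        = ‖Complex.exp (lp * (t:ℂ)) - Complex.exp (lm * (t:ℂ))‖ := rfl
      _ ≤ (t * Real.exp (-(a * t))) * ‖lp - lm‖ * ‖(1:ℝ) - 0‖ := by
          simpa [norm_sub_rev] using hmv
      _ = (t * Real.exp (-(a * t))) * ‖lp - lm‖ := by rw [this]; ring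
  have hsubne : lp - lm ≠ 0 := sub_ne_zero.2 hne
  have habs_pos : 0 < ‖lp - lm‖ := by
    simpa [norm_pos_iff] using hsubne
  have hquot : ‖(Complex.exp (lp * (t:ℂ)) - Complex.exp (lm * (t:ℂ))) / (lp - lm)‖
      ≤ t * Real.exp (-(a * t)) := by
    rw [norm_div, div_le_iff₀ habs_pos]
    exact hmv'
  refine hquot.trans ?_
  -- t * exp(-(a t)) ≤ (2/c₂) exp(-(a t)/2), and -(c₂/2)ρ²t = -(a t)/2
  have hkey : t * Real.exp (-(a * t)) ≤ (2 / c₂) * Real.exp (-(a * t / 2)) := by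
    have hsplit : Real.exp (-(a * t)) = Real.exp (-(a * t / 2)) * Real.exp (-(a * t / 2)) := by
      rw [← Real.exp_add]; ring_nf
    have hu : a * t / 2 ≤ Real.exp (a * t / 2) := by
      have := Real.add_one_le_exp (a * t / 2); linarith
    have hts : t * Real.exp (-(a * t / 2)) ≤ 2 / c₂ := by
      rw [Real.exp_neg]
      have hepos : 0 < Real.exp (a * t / 2) := Real.exp_pos _
      rw [← div_eq_mul_inv, div_le_div_iff₀ hepos hc₂pos]
      have hρsq : (1:ℝ) ≤ ρ ^ 2 := by nlinarith
      have hac : c₂ ≤ a := by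
        rw [hadef]
        have := mul_le_mul_of_nonneg_left hρsq hc₂pos.le
        linarith
      nlinarith [hu, hc₂pos, ht, hepos, hac]
    calc t * Real.exp (-(a * t)) = (t * Real.exp (-(a * t / 2))) * Real.exp (-(a * t / 2)) := by
          rw [hsplit]; ring
      _ ≤ (2 / c₂) * Real.exp (-(a * t / 2)) := by
          exact mul_le_mul_of_nonneg_right hts (Real.exp_pos _).le
  have heq : -(a * t / 2) = -(c₂ / 2) * ρ ^ 2 * t := by rw [hadef]; ring
  rw [heq] at hkey
  exact hkey
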